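/- Let S ⊆ (𝔽₂)^{2n} be a pairwise anticommuting set that is not maximal (its sum is nonzero). Then S can be extended to a pairwise anticommuting set of cardinality 2n+1. -/

import Mathlib

/-- The phase space `(𝔽₂)^{2n}`, modeled as pairs of vectors in `𝔽₂ⁿ`. -/
abbrev V (n : ℕ) := (Fin n → ZMod 2) × (Fin n → ZMod 2)

/-- The standard symplectic bilinear form `ω((a,b),(c,d)) = a·d + b·c`. -/
def sympl {n : ℕ} (P Q : V n) : ZMod 2 :=
  ∑ i, (P.1 i * Q.2 i + P.2 i * Q.1 i)

/-- A finite set is (pairwise) anticommuting if `ω(P,Q) = 1` for all distinct `P, Q`. -/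
def AC {n : ℕ} (G : Finset (V n)) : Prop :=
  ∀ P ∈ G, ∀ Q ∈ G, P ≠ Q → sympl P Q = 1

/-- A maximal pairwise anticommuting set: no strictly larger set is anticommuting. -/
def MaxAC {n : ℕ} (G : Finset (V n)) : Prop :=
  AC G ∧ ∀ H : Finset (V n), G ⊆ H → AC H → H = G

open Finset

lemma sympl_comm {n : ℕ} (P Q : V n) : sympl P Q = sympl Q P := by
  unfold sympl; apply Finset.sum_congr rfl; intros; ring

lemma sympl_self {n : ℕ} (P : V n) : sympl P P = 0 := by
  unfold sympl
  rw [Finset.sum_eq_zero]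
  intro i _
  rw [mul_comm]
  exact CharTwo.add_self_eq_zero _

noncomputable def symplB (n : ℕ) : LinearMap.BilinForm (ZMod 2) (V n) :=
  LinearMap.mk₂ (ZMod 2) sympl
    (by intro P P' Q; unfold sympl; rw [← Finset.sum_add_distrib]
        apply Finset.sum_congr rfl; intros; simp [Prod.fst_add, Prod.snd_add]; ring)
    (by intro c P Q; unfold sympl; rw [smul_eq_mul, Finset.mul_sum]
        apply Finset.sum_congr rfl; intros; simp [Prod.smul_fst, Prod.smul_snd]; ring)
    (by intro P Q Q'; unfold sympl; rw [← Finset.sum_add_distrib]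
        apply Finset.sum_congr rfl; intros; simp [Prod.fst_add, Prod.snd_add]; ring)
    (by intro c P Q; unfold sympl; rw [smul_eq_mul, Finset.mul_sum]
        apply Finset.sum_congr rfl; intros; simp [Prod.smul_fst, Prod.smul_snd]; ring)

@[simp] lemma symplB_apply {n : ℕ} (P Q : V n) : symplB n P Q = sympl P Q := rfl

lemma symplB_nondeg (n : ℕ) : (symplB n).Nondegenerate := by
  suffices hL : (symplB n).SeparatingLeft from
    ⟨hL, fun P hP => hL P (fun Q => by rw [symplB_apply, sympl_comm]; exact hP Q)⟩
  intro P hP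
  have h1 : ∀ i, P.1 i = 0 := by
    intro i
    have := hP (0, Pi.single i 1)
    simpa [sympl, Pi.single_apply, Finset.sum_ite_eq'] using this
  have h2 : ∀ i, P.2 i = 0 := by
    intro i
    have := hP (Pi.single i 1, 0)
    simpa [sympl, Pi.single_apply, Finset.sum_ite_eq'] using this
  ext i
  · exact h1 i
  · exact h2 i

lemma zmod2_cases (c : ZMod 2) : c = 0 ∨ c = 1 := by revert c; decide

lemma sympl_sum {n : ℕ} (P : V n) (U : Finset (V n)) :
    sympl P (∑ x ∈ U, x) = ∑ x ∈ U, sympl P x := by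
  exact map_sum (symplB n P) (fun x => x) U

lemma sympl_sum_eval {n : ℕ} {S U : Finset (V n)} (hS : AC S) (hU : U ⊆ S)
    {P : V n} (hP : P ∈ S) :
    sympl P (∑ x ∈ U, x) = (U.card : ZMod 2) + (if P ∈ U then 1 else 0) := by
  classical
  rw [sympl_sum]
  have h1 : ∀ x ∈ U, sympl P x = 1 + (if x = P then 1 else 0) := by
    intro x hx
    by_cases hxP : x = P
    · simp [hxP, sympl_self]; decide
    · rw [hS P hP x (hU hx) (fun h => hxP h.symm)]; simp [hxP]
  rw [Finset.sum_congr rfl h1, Finset.sum_add_distrib, Finset.sum_ite_eq' U P (fun _ => (1 : ZMod 2))]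
  simp

@[simp] lemma sympl_zero {n : ℕ} (P : V n) : sympl P 0 = 0 := by simp [sympl]

lemma subset_sum_eq_zero {n : ℕ} {S U : Finset (V n)} (hS : AC S)
    (hsum : ∑ x ∈ S, x ≠ (0 : V n)) (hU : U ⊆ S) (h0 : ∑ x ∈ U, x = 0) :
    U = ∅ := by
  classical
  by_contra hne
  obtain ⟨P1, hP1⟩ := Finset.nonempty_of_ne_empty hne
  have e1 : (0 : ZMod 2) = (U.card : ZMod 2) + 1 := by
    have := sympl_sum_eval hS hU (hU hP1)
    rw [h0] at this
    simpa [hP1] using this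
  by_cases hUS : U = S
  · exact hsum (hUS ▸ h0)
  · obtain ⟨P0, hP0S, hP0U⟩ := Finset.exists_of_ssubset (lt_of_le_of_ne hU hUS)
    have e2 : (0 : ZMod 2) = (U.card : ZMod 2) := by
      have := sympl_sum_eval hS hU hP0S
      rw [h0] at this
      simpa [hP0U, sympl_self] using this
    rw [← e2, zero_add] at e1
    exact one_ne_zero (α := ZMod 2) e1.symm

lemma linIndep {n : ℕ} {S : Finset (V n)} (hS : AC S)
    (hsum : ∑ x ∈ S, x ≠ (0 : V n)) :
    LinearIndependent (ZMod 2) ((↑) : ↥S → V n) := by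
  classical
  rw [Fintype.linearIndependent_iff]
  intro g hg i
  set U : Finset (V n) := Finset.image Subtype.val (Finset.univ.filter (fun j : ↥S => g j = 1)) with hUdef
  have hUS : U ⊆ S := by
    intro x hx
    simp only [hUdef, Finset.mem_image] at hx
    obtain ⟨j, _, rfl⟩ := hx
    exact j.2
  have hsumU : ∑ x ∈ U, x = 0 := by
    rw [Finset.sum_image (fun a _ b _ h => Subtype.val_injective h)]
    rw [← hg]
    rw [Finset.sum_filter]
    apply Finset.sum_congr rfl
    intro j _
    rcases zmod2_cases (g j) with h | h <;> simp [h]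
  have hUe := subset_sum_eq_zero hS hsum hUS hsumU
  rcases zmod2_cases (g i) with h | h
  · exact h
  · exfalso
    have : (i : V n) ∈ U := Finset.mem_image_of_mem _ (by simp [h])
    simp [hUe] at this

lemma finrank_V (n : ℕ) : Module.finrank (ZMod 2) (V n) = 2 * n := by
  rw [Module.finrank_prod, Module.finrank_pi]
  simp [Fintype.card_fin]
  ring

lemma card_le {n : ℕ} {S : Finset (V n)} (hS : AC S)
    (hsum : ∑ x ∈ S, x ≠ (0 : V n)) : S.card ≤ 2 * n := by
  have li := linIndep hS hsum
  have h1 := finrank_span_finset_eq_card li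
  have h2 : Module.finrank (ZMod 2) (Submodule.span (ZMod 2) (S : Set (V n))) ≤ 2 * n := by
    rw [← finrank_V n]
    exact Submodule.finrank_le _
  omega

lemma exists_sol {n : ℕ} {S : Finset (V n)} (hS : AC S)
    (hsum : ∑ x ∈ S, x ≠ (0 : V n)) (hcard : S.card < 2 * n) :
    ∃ Q Q' : V n, Q ≠ Q' ∧ (∀ P ∈ S, sympl P Q = 1) ∧ (∀ P ∈ S, sympl P Q' = 1) := by
  classical
  have li := linIndep hS hsum
  set W : Submodule (ZMod 2) (V n) := Submodule.span (ZMod 2) (S : Set (V n)) with hW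
  -- basis of W
  have hrange : Set.range ((↑) : ↥S → V n) = (S : Set (V n)) := Subtype.range_coe
  have heq : Submodule.span (ZMod 2) (Set.range ((↑) : ↥S → V n)) = W := by rw [hrange]
  set b : Module.Basis ↥S (ZMod 2) ↥W := (Module.Basis.span li).map (LinearEquiv.ofEq _ _ heq) with hbdef
  have hb : ∀ i : ↥S, (b i : V n) = (i : V n) := by
    intro i
    rw [hbdef, Module.Basis.map_apply]
    rw [LinearEquiv.coe_ofEq_apply]
    exact congrArg Subtype.val (Module.Basis.span_apply li i)
  -- functional on W that is 1 on each element of S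
  have hb1 : ∀ (P : V n) (hP : P ∈ S), b.sumCoords ⟨P, Submodule.subset_span hP⟩ = 1 := by
    intro P hP
    have hPb : (⟨P, Submodule.subset_span hP⟩ : ↥W) = b ⟨P, hP⟩ :=
      Subtype.ext (hb ⟨P, hP⟩).symm
    rw [hPb, Module.Basis.sumCoords_self_apply]
  obtain ⟨f, hf⟩ := LinearMap.exists_extend b.sumCoords
  -- nonzero functional vanishing on W
  have hWlt : W < ⊤ := by
    apply Submodule.lt_top_of_finrank_lt_finrank
    rw [finrank_span_finset_eq_card li, finrank_V]
    exact hcard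
  obtain ⟨g, hg0, hg⟩ := Submodule.exists_dual_map_eq_bot_of_lt_top hWlt inferInstance
  have hgW : ∀ x ∈ W, g x = 0 := by
    intro x hx
    have : g x ∈ W.map g := Submodule.mem_map_of_mem hx
    rwa [hg, Submodule.mem_bot] at this
  set e := (symplB n).toDual (symplB_nondeg n) with he
  refine ⟨e.symm f, e.symm (f + g), ?_, ?_, ?_⟩
  · intro h
    exact hg0 (by simpa using (e.symm.injective h).symm)
  · intro P hP
    have : sympl (e.symm f) P = f P := by
      have := LinearEquiv.apply_symm_apply e f
      calc sympl (e.symm f) P = (symplB n) (e.symm f) P := rfl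
        _ = ((symplB n).toDual (symplB_nondeg n) (e.symm f)) P := rfl
        _ = f P := by rw [← he, this]
    rw [sympl_comm, this]
    have : f P = b.sumCoords ⟨P, Submodule.subset_span hP⟩ := by
      rw [← hf]; rfl
    rw [this, hb1 P hP]
  · intro P hP
    have h1 : sympl (e.symm (f + g)) P = (f + g) P := by
      calc sympl (e.symm (f+g)) P = ((symplB n).toDual (symplB_nondeg n) (e.symm (f+g))) P := rfl
        _ = (f + g) P := by rw [← he, LinearEquiv.apply_symm_apply]
    rw [sympl_comm, h1]
    have h2 : f P = b.sumCoords ⟨P, Submodule.subset_span hP⟩ := by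
      rw [← hf]; rfl
    simp only [LinearMap.add_apply, h2, hb1 P hP, hgW P (Submodule.subset_span hP), add_zero]

lemma neg_self_V {n : ℕ} (x : V n) : x + x = 0 := by
  rw [← two_smul (ZMod 2) x, (by decide : (2 : ZMod 2) = 0), zero_smul]

lemma AC_insert {n : ℕ} {R : V n} {S : Finset (V n)} (hS : AC S)
    (hR : ∀ P ∈ S, sympl P R = 1) : AC (insert R S) := by
  intro P hP P' hP' hne
  rcases Finset.mem_insert.mp hP with hPe | hPm
  · rcases Finset.mem_insert.mp hP' with hPe' | hPm'
    · exact absurd (hPe.trans hPe'.symm) hne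
    · rw [hPe, sympl_comm]; exact hR P' hPm'
  · rcases Finset.mem_insert.mp hP' with hPe' | hPm'
    · rw [hPe']; exact hR P hPm
    · exact hS P hPm P' hPm' hne

/-- Extension step: if `|S| < 2n`, we can add one element keeping AC and nonzero sum. -/
lemma extend_step {n : ℕ} {S : Finset (V n)} (hS : AC S)
    (hsum : ∑ x ∈ S, x ≠ (0 : V n)) (hcard : S.card < 2 * n) :
    ∃ Q : V n, Q ∉ S ∧ AC (insert Q S) ∧ ∑ x ∈ insert Q S, x ≠ (0 : V n) := by
  classical
  obtain ⟨Q, Q', hQQ', h1, h2⟩ := exists_sol hS hsum hcard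
  set s := ∑ x ∈ S, x with hs
  have key : ∀ R : V n, (∀ P ∈ S, sympl P R = 1) → R ≠ s →
      R ∉ S ∧ AC (insert R S) ∧ ∑ x ∈ insert R S, x ≠ (0 : V n) := by
    intro R hR hRs
    have hRS : R ∉ S := by
      intro hmem
      have := hR R hmem
      rw [sympl_self] at this
      exact zero_ne_one this
    refine ⟨hRS, AC_insert hS hR, ?_⟩
    · rw [Finset.sum_insert hRS, ← hs]
      intro h0
      apply hRs
      have h3 : R + (R + s) = R + 0 := by rw [h0]
      rw [← add_assoc, neg_self_V, zero_add, add_zero] at h3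
      exact h3.symm
  by_cases hQs : Q = s
  · obtain ⟨a, b, c⟩ := key Q' h2 (fun h => hQQ' (hQs.trans h.symm))
    exact ⟨Q', a, b, c⟩
  · obtain ⟨a, b, c⟩ := key Q h1 hQs
    exact ⟨Q, a, b, c⟩

/-- Final step: if `|S| = 2n`, inserting the sum gives an AC set of size `2n+1`. -/
lemma final_step {n : ℕ} {S : Finset (V n)} (hS : AC S)
    (hsum : ∑ x ∈ S, x ≠ (0 : V n)) (hcard : S.card = 2 * n) :
    ∃ T : Finset (V n), S ⊆ T ∧ AC T ∧ T.card = 2 * n + 1 := by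
  classical
  set s := ∑ x ∈ S, x with hs
  have hkey : ∀ P ∈ S, sympl P s = 1 := by
    intro P hP
    rw [hs, sympl_sum_eval hS (Finset.Subset.refl S) hP, if_pos hP, hcard]
    push_cast
    rw [(by decide : (2 : ZMod 2) = 0)]
    ring
  have hsS : s ∉ S := by
    intro hmem
    have := hkey s hmem
    rw [sympl_self] at this
    exact zero_ne_one this
  refine ⟨insert s S, Finset.subset_insert _ _, AC_insert hS hkey, ?_⟩
  rw [Finset.card_insert_of_notMem hsS, hcard]

lemma main_aux {n : ℕ} (m : ℕ) : ∀ S : Finset (V n), AC S → ∑ x ∈ S, x ≠ (0 : V n) →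
    S.card + m = 2 * n → ∃ T : Finset (V n), S ⊆ T ∧ AC T ∧ T.card = 2 * n + 1 := by
  induction m with
  | zero =>
    intro S hS hsum hcard
    exact final_step hS hsum (by omega)
  | succ m ih =>
    intro S hS hsum hcard
    obtain ⟨Q, hQS, hAC, hsum'⟩ := extend_step hS hsum (by omega)
    obtain ⟨T, hsub, hACT, hcardT⟩ := ih (insert Q S) hAC hsum'
      (by rw [Finset.card_insert_of_notMem hQS]; omega)
    exact ⟨T, (Finset.subset_insert _ _).trans hsub, hACT, hcardT⟩

theorem stmt_15 {n : ℕ} (S : Finset (V n)) (hS : AC S)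
    (hsum : ∑ x ∈ S, x ≠ (0 : V n)) :
    ∃ T : Finset (V n), S ⊆ T ∧ AC T ∧ T.card = 2 * n + 1 := by
  have hle := card_le hS hsum
  exact main_aux (2 * n - S.card) S hS hsum (by omega)
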